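/- Fix a privacy parameter ε > 0 and positive integers d ≥ k ≥ 1, and let t ∈ [−1,1]. Let X be distributed according to the Piecewise Mechanism with privacy budget ε/k on input t, and let T equal (d/k)·X with probability k/d and 0 with probability 1 − k/d (the selection independent of X). Then Var[T] = d·(e^{ε/(2k)}+3)/(3k·(e^{ε/(2k)}−1)²) + ( d·e^{ε/(2k)}/(k·(e^{ε/(2k)}−1)) − 1 )·t². -/

import Mathlib

open Real MeasureTheory ProbabilityTheory

/-- `C` parameter of the Piecewise Mechanism. -/
noncomputable def pmC (ε : ℝ) : ℝ := (exp (ε / 2) + 1) / (exp (ε / 2) - 1)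

/-- density value `p` of the Piecewise Mechanism. -/
noncomputable def pmP (ε : ℝ) : ℝ := (exp ε - exp (ε / 2)) / (2 * exp (ε / 2) + 2)

/-- left endpoint `ℓ(t)` of the center piece. -/
noncomputable def pmL (ε t : ℝ) : ℝ := (pmC ε + 1) / 2 * t - (pmC ε - 1) / 2

/-- right endpoint `r(t)` of the center piece. -/
noncomputable def pmR (ε t : ℝ) : ℝ := pmL ε t + pmC ε - 1

/-- output probability density of the Piecewise Mechanism. -/
noncomputable def pmPdf (ε t x : ℝ) : ℝ :=
  if pmL ε t ≤ x ∧ x ≤ pmR ε t then pmP ε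
  else if -pmC ε ≤ x ∧ x ≤ pmC ε then pmP ε / exp ε
  else 0

lemma pm_final_algebra (g dd kk t : ℝ) (hg : g - 1 ≠ 0) (hk : kk ≠ 0) :
    dd / kk * (t ^ 2 * g / (g - 1) + (g + 3) / (3 * (g - 1) ^ 2)) - t ^ 2
      = dd * (g + 3) / (3 * kk * (g - 1) ^ 2) + (dd * g / (kk * (g - 1)) - 1) * t ^ 2 := by
  field_simp
  ring

lemma pm_one_lt_g {ε : ℝ} (hε : 0 < ε) : 1 < exp (ε / 2) := by
  calc (1:ℝ) = exp 0 := by simp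
  _ < exp (ε / 2) := exp_lt_exp.mpr (by linarith)

lemma pm_one_lt_C {ε : ℝ} (hε : 0 < ε) : 1 < pmC ε := by
  have hg := pm_one_lt_g hε
  rw [pmC, lt_div_iff₀ (by linarith)]; linarith

lemma pm_exp_eq_sq (ε : ℝ) : exp ε = exp (ε / 2) * exp (ε / 2) := by
  rw [← exp_add]; ring_nf

lemma pm_q_nonneg {ε : ℝ} (hε : 0 < ε) : 0 ≤ pmP ε / exp ε := by
  have hg := pm_one_lt_g hε
  have hp : 0 ≤ pmP ε := by
    rw [pmP]
    apply div_nonneg _ (by linarith)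
    rw [pm_exp_eq_sq]; nlinarith
  positivity

lemma pm_q_le_p {ε : ℝ} (hε : 0 < ε) : pmP ε / exp ε ≤ pmP ε := by
  have hg := pm_one_lt_g hε
  have hp : 0 ≤ pmP ε := by
    rw [pmP]
    apply div_nonneg _ (by linarith)
    rw [pm_exp_eq_sq]; nlinarith
  have h1 : 1 ≤ exp ε := by rw [pm_exp_eq_sq]; nlinarith
  calc pmP ε / exp ε ≤ pmP ε / 1 :=
        div_le_div_of_nonneg_left hp one_pos h1
      _ = pmP ε := div_one _

lemma pm_L_bounds {ε t : ℝ} (hε : 0 < ε) (ht : t ∈ Set.Icc (-1:ℝ) 1) :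
    -pmC ε ≤ pmL ε t ∧ pmL ε t ≤ pmR ε t ∧ pmR ε t ≤ pmC ε := by
  have hC := pm_one_lt_C hε
  obtain ⟨h1, h2⟩ := ht
  refine ⟨?_, ?_, ?_⟩
  · rw [pmL]; nlinarith
  · rw [pmR]; linarith
  · rw [pmR, pmL]; nlinarith

lemma pm_decomp {ε t : ℝ} (hε : 0 < ε) (ht : t ∈ Set.Icc (-1:ℝ) 1) (x : ℝ) :
    pmPdf ε t x =
      (Set.Icc (-pmC ε) (pmC ε)).indicator (fun _ => pmP ε / exp ε) x
        + (Set.Icc (pmL ε t) (pmR ε t)).indicator (fun _ => pmP ε - pmP ε / exp ε) x := by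
  obtain ⟨hb1, hb2, hb3⟩ := pm_L_bounds hε ht
  rw [pmPdf]
  by_cases h1 : pmL ε t ≤ x ∧ x ≤ pmR ε t
  · have h2 : x ∈ Set.Icc (-pmC ε) (pmC ε) := ⟨by linarith [h1.1], by linarith [h1.2]⟩
    rw [if_pos h1, Set.indicator_of_mem h2, Set.indicator_of_mem (Set.mem_Icc.mpr h1)]
    ring
  · rw [if_neg h1, Set.indicator_of_notMem (fun hm => h1 (Set.mem_Icc.mp hm))]
    by_cases h2 : -pmC ε ≤ x ∧ x ≤ pmC ε
    · rw [if_pos h2, Set.indicator_of_mem (Set.mem_Icc.mpr h2)]; ring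
    · rw [if_neg h2, Set.indicator_of_notMem (fun hm => h2 (Set.mem_Icc.mp hm))]; ring

lemma pm_mul_indic (f : ℝ → ℝ) (a b s : ℝ) :
    (fun x => f x * (Set.Icc a b).indicator (fun _ => s) x)
      = (Set.Icc a b).indicator (fun x => f x * s) := by
  ext x
  by_cases h : x ∈ Set.Icc a b <;>
    simp [Set.indicator_of_mem, Set.indicator_of_notMem, h]

lemma pm_int_mul_indic {f : ℝ → ℝ} (hf : Continuous f) (a b s : ℝ) :
    Integrable (fun x => f x * (Set.Icc a b).indicator (fun _ => s) x) := by
  rw [pm_mul_indic, integrable_indicator_iff measurableSet_Icc]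
  exact (hf.mul continuous_const).integrableOn_Icc

lemma pm_integral_mul_indic (f : ℝ → ℝ) {a b : ℝ} (s : ℝ) (hab : a ≤ b) :
    ∫ x, f x * (Set.Icc a b).indicator (fun _ => s) x = s * ∫ x in a..b, f x := by
  rw [pm_mul_indic, integral_indicator measurableSet_Icc,
    integral_Icc_eq_integral_Ioc, ← intervalIntegral.integral_of_le hab,
    intervalIntegral.integral_mul_const, mul_comm]

lemma pm_pdf_integrable {ε t : ℝ} (hε : 0 < ε) (ht : t ∈ Set.Icc (-1:ℝ) 1)
    {f : ℝ → ℝ} (hf : Continuous f) :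
    Integrable (fun x => f x * pmPdf ε t x) := by
  have : (fun x => f x * pmPdf ε t x) =
      fun x => f x * (Set.Icc (-pmC ε) (pmC ε)).indicator (fun _ => pmP ε / exp ε) x
        + f x * (Set.Icc (pmL ε t) (pmR ε t)).indicator (fun _ => pmP ε - pmP ε / exp ε) x := by
    ext x; rw [pm_decomp hε ht x]; ring
  rw [this]
  exact (pm_int_mul_indic hf _ _ _).add (pm_int_mul_indic hf _ _ _)

lemma pm_pdf_integral {ε t : ℝ} (hε : 0 < ε) (ht : t ∈ Set.Icc (-1:ℝ) 1)
    {f : ℝ → ℝ} (hf : Continuous f) :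
    ∫ x, f x * pmPdf ε t x
      = (pmP ε / exp ε) * (∫ x in (-pmC ε)..(pmC ε), f x)
        + (pmP ε - pmP ε / exp ε) * (∫ x in (pmL ε t)..(pmR ε t), f x) := by
  obtain ⟨hb1, hb2, hb3⟩ := pm_L_bounds hε ht
  have hC : 1 < pmC ε := pm_one_lt_C hε
  have : (fun x => f x * pmPdf ε t x) =
      fun x => f x * (Set.Icc (-pmC ε) (pmC ε)).indicator (fun _ => pmP ε / exp ε) x
        + f x * (Set.Icc (pmL ε t) (pmR ε t)).indicator (fun _ => pmP ε - pmP ε / exp ε) x := by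
    ext x; rw [pm_decomp hε ht x]; ring
  rw [this, integral_add (pm_int_mul_indic hf _ _ _) (pm_int_mul_indic hf _ _ _),
    pm_integral_mul_indic f _ (by linarith), pm_integral_mul_indic f _ hb2]

lemma pm_moment0 {ε t : ℝ} (hε : 0 < ε) (ht : t ∈ Set.Icc (-1:ℝ) 1) :
    ∫ x, pmPdf ε t x = 1 := by
  have h := pm_pdf_integral hε ht (f := fun _ => (1:ℝ)) continuous_const
  simp only [one_mul] at h
  rw [h]
  have hg := pm_one_lt_g hε
  rw [intervalIntegral.integral_const, intervalIntegral.integral_const,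
    ]
  simp only [pmP, pmR, pmL, pmC]
  rw [pm_exp_eq_sq ε]
  have h1 : exp (ε/2) - 1 ≠ 0 := by linarith
  have h2 : exp (ε/2) + 1 ≠ 0 := by positivity
  have h3 : exp (ε/2) ≠ 0 := by positivity
  generalize exp (ε/2) = e at *
  simp only [smul_eq_mul]
  field_simp
  ring

lemma pm_moment1 {ε t : ℝ} (hε : 0 < ε) (ht : t ∈ Set.Icc (-1:ℝ) 1) :
    ∫ x, x * pmPdf ε t x = t := by
  have h := pm_pdf_integral hε ht (f := fun x => x) continuous_id
  rw [h, integral_id, integral_id]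
  have hg := pm_one_lt_g hε
  simp only [pmP, pmR, pmL, pmC]
  rw [pm_exp_eq_sq ε]
  have h1 : exp (ε/2) - 1 ≠ 0 := by linarith
  have h2 : exp (ε/2) + 1 ≠ 0 := by positivity
  have h3 : exp (ε/2) ≠ 0 := by positivity
  field_simp
  ring

lemma pm_moment2 {ε t : ℝ} (hε : 0 < ε) (ht : t ∈ Set.Icc (-1:ℝ) 1) :
    ∫ x, x ^ 2 * pmPdf ε t x
      = t ^ 2 * exp (ε/2) / (exp (ε/2) - 1)
        + (exp (ε/2) + 3) / (3 * (exp (ε/2) - 1) ^ 2) := by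
  have h := pm_pdf_integral hε ht (f := fun x => x ^ 2) (continuous_pow 2)
  rw [h, integral_pow, integral_pow]
  have hg := pm_one_lt_g hε
  simp only [pmP, pmR, pmL, pmC]
  rw [pm_exp_eq_sq ε]
  have h1 : exp (ε/2) - 1 ≠ 0 := by linarith
  have h2 : exp (ε/2) + 1 ≠ 0 := by positivity
  have h3 : exp (ε/2) ≠ 0 := by positivity
  generalize exp (ε/2) = e at *
  have h4 : -2 + e * 2 ≠ 0 := by linarith
  have h5 : -1 + e ≠ 0 := by linarith
  field_simp
  ring_nf
  field_simp
  ring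

/-- Variance of the sampled-and-scaled report of one attribute perturbed by the
Piecewise Mechanism with budget `ε/k`: if `X` is distributed per the PM density,
`S` is an independent Bernoulli indicator with success probability `k/d`, and
`T = (d/k)·S·X`, then
`Var[T] = d(e^{ε/(2k)}+3)/(3k(e^{ε/(2k)}−1)²) + (d·e^{ε/(2k)}/(k(e^{ε/(2k)}−1)) − 1)·t²`. -/
theorem stmt_16 {Ω : Type*} [MeasureSpace Ω] [IsProbabilityMeasure (ℙ : Measure Ω)]
    (ε : ℝ) (hε : 0 < ε) (d k : ℕ) (hk : 1 ≤ k) (hkd : k ≤ d)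
    (t : ℝ) (ht : t ∈ Set.Icc (-1 : ℝ) 1)
    (X S : Ω → ℝ) (hXmeas : Measurable X)
    (hXlaw : Measure.map X ℙ =
      volume.withDensity (fun x => ENNReal.ofReal (pmPdf (ε / k) t x)))
    (hS01 : ∀ ω, S ω = 0 ∨ S ω = 1) (hSmeas : Measurable S)
    (hSp : ℙ {ω | S ω = 1} = ENNReal.ofReal ((k : ℝ) / d))
    (hindep : IndepFun S X ℙ)
    (T : Ω → ℝ) (hT : T = fun ω => ((d : ℝ) / k) * S ω * X ω) :
    variance T ℙ =
      (d : ℝ) * (exp (ε / (2 * k)) + 3) / (3 * k * (exp (ε / (2 * k)) - 1) ^ 2) +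
        ((d : ℝ) * exp (ε / (2 * k)) / (k * (exp (ε / (2 * k)) - 1)) - 1) * t ^ 2 := by
  have hk0 : (0:ℝ) < k := by exact_mod_cast hk
  have hd0 : (0:ℝ) < d := by exact_mod_cast lt_of_lt_of_le Nat.zero_lt_one (hk.trans hkd)
  have he' : 0 < ε / k := div_pos hε hk0
  have hexp : ε / (2 * k) = (ε / k) / 2 := by rw [div_div, mul_comm]
  have hg : 1 < exp ((ε / k) / 2) := pm_one_lt_g he'
  have hpdfmeas : Measurable (pmPdf (ε / k) t) := by
    unfold pmPdf
    exact Measurable.ite measurableSet_Icc measurable_const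
      (Measurable.ite measurableSet_Icc measurable_const measurable_const)
  have hpdf0 : ∀ x, 0 ≤ pmPdf (ε / k) t x := by
    intro x
    unfold pmPdf
    split_ifs with h1 h2
    · linarith [pm_q_le_p he', pm_q_nonneg he']
    · exact pm_q_nonneg he'
    · exact le_refl 0
  have hlaw' : Measure.map X ℙ
      = volume.withDensity (fun x => ((pmPdf (ε / k) t x).toNNReal : ENNReal)) := hXlaw
  have key : ∀ f : ℝ → ℝ, Continuous f →
      ∫ ω, f (X ω) ∂ℙ = ∫ x, f x * pmPdf (ε / k) t x := by
    intro f hf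
    rw [← integral_map hXmeas.aemeasurable hf.aestronglyMeasurable, hlaw',
      integral_withDensity_eq_integral_smul hpdfmeas.real_toNNReal f]
    congr 1
    ext x
    rw [NNReal.smul_def, Real.coe_toNNReal _ (hpdf0 x), smul_eq_mul, mul_comm]
  have keyInt : ∀ f : ℝ → ℝ, Continuous f → Integrable (fun ω => f (X ω)) ℙ := by
    intro f hf
    have h1 : Integrable f (Measure.map X ℙ) := by
      rw [hXlaw, integrable_withDensity_iff hpdfmeas.ennreal_ofReal
        (Filter.Eventually.of_forall fun x => ENNReal.ofReal_lt_top)]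
      have heq : (fun x => f x * (ENNReal.ofReal (pmPdf (ε / k) t x)).toReal)
          = fun x => f x * pmPdf (ε / k) t x := by
        ext x; rw [ENNReal.toReal_ofReal (hpdf0 x)]
      rw [heq]
      exact pm_pdf_integrable he' ht hf
    exact (integrable_map_measure hf.aestronglyMeasurable hXmeas.aemeasurable).mp h1
  have hEX : ∫ ω, X ω ∂ℙ = t := by
    have := (key (fun x => x) continuous_id).trans (pm_moment1 he' ht)
    simpa using this
  have hEX2 : ∫ ω, X ω ^ 2 ∂ℙ
      = t ^ 2 * exp ((ε / k)/2) / (exp ((ε / k)/2) - 1)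
        + (exp ((ε / k)/2) + 3) / (3 * (exp ((ε / k)/2) - 1) ^ 2) := by
    have := (key (fun x => x ^ 2) (continuous_pow 2)).trans (pm_moment2 he' ht)
    simpa using this
  have hIX2 : Integrable (fun ω => X ω ^ 2) ℙ := keyInt (fun x => x ^ 2) (continuous_pow 2)
  have hmeasS1 : MeasurableSet {ω | S ω = 1} := hSmeas (measurableSet_singleton 1)
  have hES : ∫ ω, S ω ∂ℙ = (k : ℝ) / d := by
    have hSind : S = Set.indicator {ω | S ω = 1} (fun _ => (1:ℝ)) := by
      funext ω
      rcases hS01 ω with h | h <;>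
        simp [Set.indicator_apply, Set.mem_setOf_eq, h]
    rw [hSind, integral_indicator_const (1:ℝ) hmeasS1, measureReal_def, hSp, smul_eq_mul, mul_one,
      ENNReal.toReal_ofReal (by positivity)]
  have hSX : ∫ ω, S ω * X ω ∂ℙ = ((k : ℝ) / d) * t := by
    have h := hindep.integral_mul_eq_mul_integral hSmeas.aestronglyMeasurable hXmeas.aestronglyMeasurable
    rw [← hES, ← hEX]
    exact h
  have hindep2 : IndepFun S (fun ω => X ω ^ 2) ℙ := by
    have := hindep.comp measurable_id (measurable_id.pow_const 2)
    simpa [Function.comp_def] using this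
  have hSX2 : ∫ ω, S ω * X ω ^ 2 ∂ℙ
      = ((k : ℝ) / d) * (t ^ 2 * exp ((ε / k)/2) / (exp ((ε / k)/2) - 1)
        + (exp ((ε / k)/2) + 3) / (3 * (exp ((ε / k)/2) - 1) ^ 2)) := by
    have h := hindep2.integral_mul_eq_mul_integral hSmeas.aestronglyMeasurable
      (hXmeas.pow_const 2).aestronglyMeasurable
    rw [← hES, ← hEX2]
    exact h
  have hET : ∫ ω, T ω ∂ℙ = t := by
    rw [hT]
    simp_rw [mul_assoc]
    rw [integral_const_mul, hSX]
    field_simp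
  have hsq : (fun ω => (((d : ℝ) / k) * S ω * X ω) ^ 2)
      = fun ω => ((d : ℝ) / k) ^ 2 * (S ω * X ω ^ 2) := by
    funext ω; rcases hS01 ω with h | h <;> rw [h] <;> ring
  have hET2 : ∫ ω, T ω ^ 2 ∂ℙ
      = ((d : ℝ) / k) * (t ^ 2 * exp ((ε / k)/2) / (exp ((ε / k)/2) - 1)
        + (exp ((ε / k)/2) + 3) / (3 * (exp ((ε / k)/2) - 1) ^ 2)) := by
    rw [hT]
    rw [show (fun ω => (fun ω => ((d : ℝ) / k) * S ω * X ω) ω ^ 2)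
        = fun ω => ((d : ℝ) / k) ^ 2 * (S ω * X ω ^ 2) from hsq]
    rw [integral_const_mul, hSX2]
    field_simp
  have hTmeas : AEStronglyMeasurable T ℙ := by
    rw [hT]
    exact ((measurable_const.mul hSmeas).mul hXmeas).aestronglyMeasurable
  have hInt2 : Integrable (fun ω => T ω ^ 2) ℙ := by
    rw [hT]
    rw [show (fun ω => (fun ω => ((d : ℝ) / k) * S ω * X ω) ω ^ 2)
        = fun ω => ((d : ℝ) / k) ^ 2 * (S ω * X ω ^ 2) from hsq]
    apply Integrable.const_mul
    apply hIX2.mono' (hSmeas.mul (hXmeas.pow_const 2)).aestronglyMeasurable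
    filter_upwards with ω
    rcases hS01 ω with h | h <;>
      simp [h, Real.norm_eq_abs, abs_of_nonneg (sq_nonneg (X ω)), sq_nonneg]
  have hmem : MemLp T 2 ℙ := (memLp_two_iff_integrable_sq hTmeas).mpr hInt2
  rw [variance_eq_sub hmem]
  have hpow : ∫ ω, (T ^ 2) ω ∂ℙ = ∫ ω, T ω ^ 2 ∂ℙ := rfl
  rw [hpow, hET2, hET, hexp]
  have h1 : exp ((ε / k)/2) - 1 ≠ 0 := by linarith
  exact pm_final_algebra _ _ _ _ h1 hk0.ne'
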